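/- For every real a ≥ 1 and every integer t ≥ 1, (t·a)^(2 − 2/t) · ( (t·(a+1))^(2/t) − (t·a)^(2/t) ) ≥ t·a; in particular this quantity is at least 1. -/

import Mathlib

/-- The mean-value-theorem estimate in the size analysis of the multi-embedding
construction: for every real `a ≥ 1` and integer `t ≥ 1`,
`(t·a)^(2 − 2/t) · ((t·(a+1))^(2/t) − (t·a)^(2/t)) ≥ t·a ≥ 1`. -/
theorem mvt_exponent_estimate (a : ℝ) (ha : 1 ≤ a) (t : ℕ) (ht : 1 ≤ t) :
    (t : ℝ) * a ≤
      ((t : ℝ) * a) ^ ((2 : ℝ) - 2 / (t : ℝ)) *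
        (((t : ℝ) * (a + 1)) ^ ((2 : ℝ) / (t : ℝ)) - ((t : ℝ) * a) ^ ((2 : ℝ) / (t : ℝ))) ∧
    (1 : ℝ) ≤
      ((t : ℝ) * a) ^ ((2 : ℝ) - 2 / (t : ℝ)) *
        (((t : ℝ) * (a + 1)) ^ ((2 : ℝ) / (t : ℝ)) - ((t : ℝ) * a) ^ ((2 : ℝ) / (t : ℝ))) := by
  have ht' : (1 : ℝ) ≤ (t : ℝ) := by exact_mod_cast ht
  have htpos : (0 : ℝ) < t := lt_of_lt_of_le one_pos ht'
  have hapos : (0 : ℝ) < a := lt_of_lt_of_le one_pos ha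
  set x : ℝ := (t : ℝ) * a with hxdef
  set p : ℝ := 2 / (t : ℝ) with hpdef
  have hx1 : (1 : ℝ) ≤ x := one_le_mul_of_one_le_of_one_le ht' ha
  have hxpos : (0 : ℝ) < x := lt_of_lt_of_le one_pos hx1
  have hppos : (0 : ℝ) < p := div_pos two_pos htpos
  set r : ℝ := (a + 1) / a with hrdef
  have hr1 : (1 : ℝ) < r := by
    rw [hrdef, lt_div_iff₀ hapos]; linarith
  have hrpos : (0 : ℝ) < r := lt_trans one_pos hr1
  -- log r ≥ 1/(a+1)
  have hlog : 1 / (a + 1) ≤ Real.log r := by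
    have h1 : Real.log r⁻¹ ≤ r⁻¹ - 1 :=
      Real.log_le_sub_one_of_pos (inv_pos.mpr hrpos)
    rw [Real.log_inv] at h1
    have h2 : 1 - r⁻¹ ≤ Real.log r := by linarith
    have h3 : r⁻¹ = a / (a + 1) := by
      rw [hrdef]; field_simp
    rw [h3] at h2
    have h4 : 1 - a / (a + 1) = 1 / (a + 1) := by field_simp; ring
    linarith [h2, h4.symm.le]
  -- r^p - 1 ≥ p * log r
  have hrp : p * Real.log r ≤ r ^ p - 1 := by
    have : r ^ p = Real.exp (p * Real.log r) := by
      rw [Real.rpow_def_of_pos hrpos, mul_comm]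
    rw [this]
    linarith [Real.add_one_le_exp (p * Real.log r)]
  -- key: 1 ≤ x * (r^p - 1)
  have hkey : (1 : ℝ) ≤ x * (r ^ p - 1) := by
    have h5 : p * (1 / (a + 1)) ≤ p * Real.log r :=
      mul_le_mul_of_nonneg_left hlog hppos.le
    have h6 : x * (p * (1 / (a + 1))) ≤ x * (r ^ p - 1) :=
      mul_le_mul_of_nonneg_left (le_trans h5 hrp) hxpos.le
    have h7 : x * (p * (1 / (a + 1))) = 2 * a / (a + 1) := by
      rw [hxdef, hpdef]
      field_simp
    have h8 : (1 : ℝ) ≤ 2 * a / (a + 1) := by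
      rw [le_div_iff₀ (by linarith : (0:ℝ) < a + 1)]; linarith
    linarith [h7 ▸ h6]
  -- rewrite the expression
  have hy : (t : ℝ) * (a + 1) = x * r := by
    rw [hxdef, hrdef]; field_simp
  have hyp : ((t : ℝ) * (a + 1)) ^ p = x ^ p * r ^ p := by
    rw [hy, Real.mul_rpow hxpos.le hrpos.le]
  have hsum : x ^ ((2 : ℝ) - p) * x ^ p = x ^ (2 : ℝ) := by
    rw [← Real.rpow_add hxpos]; ring_nf
  have hmain :
      x ^ ((2 : ℝ) - p) * (((t : ℝ) * (a + 1)) ^ p - x ^ p)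
        = x ^ (2 : ℝ) * (r ^ p - 1) := by
    rw [hyp, ← hsum]; ring
  have hx2 : x ^ (2 : ℝ) = x * x := by
    rw [show (2:ℝ) = ((2:ℕ):ℝ) by norm_num, Real.rpow_natCast]; ring
  have hfinal : x ≤ x ^ ((2 : ℝ) - p) * (((t : ℝ) * (a + 1)) ^ p - x ^ p) := by
    rw [hmain, hx2]
    calc x = x * 1 := (mul_one x).symm
      _ ≤ x * (x * (r ^ p - 1)) := mul_le_mul_of_nonneg_left hkey hxpos.le
      _ = x * x * (r ^ p - 1) := by ring
  exact ⟨hfinal, le_trans hx1 hfinal⟩
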